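/- Let λ, κ > 0, α, β ∈ ℝ and c > 0, and suppose (α/λ, β/κ) lies in the CGL region CGL(c⁻¹), i.e. either (α/λ)(β/κ) ≥ 0 or (|α/λ|·|β/κ| − 1)/(|α/λ| + |β/κ|) < c⁻¹. Then there exists δ ≠ 0 such that J(δ) := 2δ√((1 + c⁻²)λκ) + c⁻¹(δ²κ + λ) − |δ²β − α| > 0. -/

import Mathlib

lemma coreA_stmt7 (r a b : ℝ) (hr : 0 < r) (hab : a * b ≥ 0) :
    ∃ s : ℝ, 0 < s ∧ |s * b - a| < 2 * Real.sqrt (s * (1 + r ^ 2)) + r * (s + 1) := by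
  by_cases hb : b = 0
  · refine ⟨|a| / r + 1, by positivity, ?_⟩
    have h1 : r * (|a| / r + 1 + 1) = |a| + 2 * r := by field_simp; ring
    have h2 : |(|a| / r + 1) * b - a| = |a| := by rw [hb]; simp
    rw [h1, h2]
    nlinarith [Real.sqrt_nonneg ((|a| / r + 1) * (1 + r ^ 2))]
  · by_cases ha : a = 0
    · refine ⟨r / |b|, by positivity, ?_⟩
      have hb' : (0:ℝ) < |b| := abs_pos.mpr hb
      have h2 : |r / |b| * b - a| = r := by
        rw [ha, sub_zero, abs_mul, abs_div, abs_abs, abs_of_pos hr]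
        field_simp
      rw [h2]
      nlinarith [Real.sqrt_nonneg (r / |b| * (1 + r ^ 2)), mul_pos hr (div_pos hr hb')]
    · have hnn : 0 ≤ a / b := by
        have : a / b = a * b / b ^ 2 := by field_simp
        rw [this]; positivity
      have hs : 0 < a / b := hnn.lt_of_ne' (div_ne_zero ha hb)
      refine ⟨a / b, hs, ?_⟩
      have h2 : a / b * b - a = 0 := by field_simp; ring
      rw [h2, abs_zero]
      positivity

lemma coreB_stmt7 (r a b : ℝ) (hr : 0 < r) (hab : a * b < 0)
    (h : |a| * |b| - 1 < r * (|a| + |b|)) :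
    ∃ s : ℝ, 0 < s ∧ |s * b - a| < 2 * Real.sqrt (s * (1 + r ^ 2)) + r * (s + 1) := by
  set p := |a| with hp
  set q := |b| with hq
  have ha : a ≠ 0 := fun h0 => by simp [h0] at hab
  have hb : b ≠ 0 := fun h0 => by simp [h0] at hab
  have hp0 : 0 < p := abs_pos.mpr ha
  have hq0 : 0 < q := abs_pos.mpr hb
  have key : ∀ s : ℝ, 0 < s → |s * b - a| = s * q + p := by
    intro s hs
    rcases lt_trichotomy a 0 with h1 | h1 | h1
    · have hb1 : 0 < b := by nlinarith
      rw [abs_of_pos (by nlinarith), hp, hq, abs_of_neg h1, abs_of_pos hb1]; ring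
    · exact absurd h1 ha
    · have hb1 : b < 0 := by nlinarith
      rw [abs_of_neg (by nlinarith), hp, hq, abs_of_pos h1, abs_of_neg hb1]; ring
  by_cases hpr : p ≤ r
  · refine ⟨(1 + r ^ 2) / (q + 1) ^ 2, by positivity, ?_⟩
    rw [key _ (by positivity)]
    have hs1 : (1 + r ^ 2) / (q + 1) ^ 2 * (1 + r ^ 2) = ((1 + r ^ 2) / (q + 1)) ^ 2 := by
      field_simp
    rw [hs1, Real.sqrt_sq (by positivity)]
    rw [show ((1:ℝ) + r ^ 2) / (q + 1) ^ 2 * q + p =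
        ((1 + r ^ 2) * q + p * (q + 1) ^ 2) / (q + 1) ^ 2 from by field_simp,
      show 2 * ((1 + r ^ 2) / (q + 1)) + r * ((1 + r ^ 2) / (q + 1) ^ 2 + 1) =
        (2 * (1 + r ^ 2) * (q + 1) + r * (1 + r ^ 2) + r * (q + 1) ^ 2) / (q + 1) ^ 2 from by
        field_simp; ring,
      div_lt_div_iff₀ (by positivity) (by positivity)]
    have hq1 : (0:ℝ) < (q + 1) ^ 2 := by positivity
    have hlt : (1 + r ^ 2) * q + p * (q + 1) ^ 2 <
        2 * (1 + r ^ 2) * (q + 1) + r * (1 + r ^ 2) + r * (q + 1) ^ 2 := by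
      nlinarith [mul_nonneg (sub_nonneg.mpr hpr) (sq_nonneg (q + 1)),
        mul_pos (by positivity : (0:ℝ) < 1 + r ^ 2) (by linarith : (0:ℝ) < q + 2)]
    exact mul_lt_mul_of_pos_right hlt hq1
  · push_neg at hpr
    by_cases hqr : q ≤ r
    · have hpos : 0 < (p - r) ^ 2 / (1 + r ^ 2) :=
        div_pos (pow_pos (by linarith) 2) (by positivity)
      refine ⟨(p - r) ^ 2 / (1 + r ^ 2), hpos, ?_⟩
      rw [key _ hpos]
      have hs1 : (p - r) ^ 2 / (1 + r ^ 2) * (1 + r ^ 2) = (p - r) ^ 2 := by field_simp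
      rw [hs1, Real.sqrt_sq (by linarith)]
      nlinarith [mul_nonneg hpos.le (sub_nonneg.mpr hqr)]
    · push_neg at hqr
      have hd : 0 < q - r := by linarith
      refine ⟨(1 + r ^ 2) / (q - r) ^ 2, by positivity, ?_⟩
      rw [key _ (by positivity)]
      have hs1 : (1 + r ^ 2) / (q - r) ^ 2 * (1 + r ^ 2) = ((1 + r ^ 2) / (q - r)) ^ 2 := by
        field_simp
      rw [hs1, Real.sqrt_sq (by positivity)]
      have hkey : (p - r) * (q - r) < 1 + r ^ 2 := by nlinarith
      have hd2 : 0 < (q - r) ^ 2 := by positivity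
      rw [show ((1:ℝ) + r ^ 2) / (q - r) ^ 2 * q + p =
          ((1 + r ^ 2) * q + p * (q - r) ^ 2) / (q - r) ^ 2 from by field_simp,
        show 2 * ((1 + r ^ 2) / (q - r)) + r * ((1 + r ^ 2) / (q - r) ^ 2 + 1) =
          (2 * (1 + r ^ 2) * (q - r) + r * (1 + r ^ 2) + r * (q - r) ^ 2) / (q - r) ^ 2 from by
          field_simp; ring,
        div_lt_div_iff₀ hd2 hd2]
      nlinarith [mul_pos hd2 hd, mul_pos hd hd, mul_pos hd2 (sub_pos.mpr hkey)]

lemma core_stmt7 (r a b : ℝ) (hr : 0 < r)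
    (h : a * b ≥ 0 ∨ (|a| * |b| - 1) / (|a| + |b|) < r) :
    ∃ s : ℝ, 0 < s ∧ |s * b - a| < 2 * Real.sqrt (s * (1 + r ^ 2)) + r * (s + 1) := by
  by_cases hab : a * b ≥ 0
  · exact coreA_stmt7 r a b hr hab
  · push_neg at hab
    rcases h with h | h
    · exact absurd h (not_le.mpr hab)
    · have ha : a ≠ 0 := fun h0 => by simp [h0] at hab
      have hb : b ≠ 0 := fun h0 => by simp [h0] at hab
      have hsum : 0 < |a| + |b| := by positivity
      exact coreB_stmt7 r a b hr hab ((div_lt_iff₀ hsum).mp h)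

theorem stmt_7 (lam kap α β c : ℝ) (hlam : 0 < lam) (hkap : 0 < kap) (hc : 0 < c)
    (hCGL : (α / lam) * (β / kap) ≥ 0 ∨
      (|α / lam| * |β / kap| - 1) / (|α / lam| + |β / kap|) < c⁻¹) :
    ∃ δ : ℝ, δ ≠ 0 ∧
      0 < 2 * δ * Real.sqrt ((1 + c⁻¹ ^ 2) * lam * kap)
          + c⁻¹ * (δ ^ 2 * kap + lam) - |δ ^ 2 * β - α| := by
  set r := c⁻¹ with hrdef
  have hr : 0 < r := inv_pos.mpr hc
  obtain ⟨s, hs, hcore⟩ := core_stmt7 r (α / lam) (β / kap) hr hCGL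
  have hslk : 0 < s * lam / kap := by positivity
  refine ⟨Real.sqrt (s * lam / kap), by positivity, ?_⟩
  set δ := Real.sqrt (s * lam / kap) with hδdef
  have hδ2 : δ ^ 2 = s * lam / kap := Real.sq_sqrt hslk.le
  have h1 : δ * Real.sqrt ((1 + r ^ 2) * lam * kap) = lam * Real.sqrt (s * (1 + r ^ 2)) := by
    rw [hδdef, ← Real.sqrt_mul hslk.le,
      show s * lam / kap * ((1 + r ^ 2) * lam * kap) = s * (1 + r ^ 2) * lam ^ 2 from by
        field_simp,
      Real.sqrt_mul (by positivity), Real.sqrt_sq hlam.le]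
    ring
  have h2 : r * (δ ^ 2 * kap + lam) = lam * (r * (s + 1)) := by
    rw [hδ2]; field_simp
  have h3 : |δ ^ 2 * β - α| = lam * |s * (β / kap) - α / lam| := by
    rw [hδ2, show s * lam / kap * β - α = lam * (s * (β / kap) - α / lam) from by
      field_simp, abs_mul, abs_of_pos hlam]
  rw [show 2 * δ * Real.sqrt ((1 + r ^ 2) * lam * kap) =
    2 * (δ * Real.sqrt ((1 + r ^ 2) * lam * kap)) from by ring, h1, h2, h3]
  have : 0 < lam * (2 * Real.sqrt (s * (1 + r ^ 2)) + r * (s + 1)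
      - |s * (β / kap) - α / lam|) := mul_pos hlam (by linarith)
  linarith [this]
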